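/- Let n ≥ max(2m,3) with m ≥ 1. The set S of all n×n complex matrices of the block form with first row (μ, −μ x̄ᵀH′A, c), middle block rows (0, A, x), and last row (0, 0, 1/μ̄) — where μ, c ∈ ℂ with μ ≠ 0, x ∈ ℂ^{n−2}, A is an (n−2)×(n−2) complex matrix with Aᵀ H′ Ā = H′, and 2 Re(c/μ) + xᵀ H′ x̄ = 0 — is a subgroup of GLₙ(ℂ), and every U ∈ S satisfies Uᵀ H Ū = H (i.e., S ⊆ U(H)). -/

import Mathlib

/- The standard Hermitian matrix of signature (n-m, m) in the anti-diagonal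
block form (formformaminus) of the paper; for the parameters (n-2, m-1) it is
the central block H′ of Hmat n m. -/
def Hmat (n m : ℕ) : Matrix (Fin n) (Fin n) ℂ := fun i j =>
  if i.1 + j.1 + 1 = n ∧ (i.1 < m ∨ n ≤ i.1 + m) then 1
  else if i = j ∧ m ≤ i.1 ∧ i.1 + m < n then 1 else 0

/-- The matrix of block form (formalgebra): first row (μ, −μ x̄ᵀH′A, c),
middle rows (0, A, x), last row (0, 0, 1/μ̄). -/
noncomputable def mkS (n m : ℕ) (μ c : ℂ) (x : Fin (n - 2) → ℂ)
    (A : Matrix (Fin (n - 2)) (Fin (n - 2)) ℂ) : Matrix (Fin n) (Fin n) ℂ :=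
  fun i j =>
    if hi0 : i.1 = 0 then
      if hj0 : j.1 = 0 then μ
      else if hjn : j.1 = n - 1 then c
      else -μ * ∑ k, ∑ l, (starRingEnd ℂ) (x k) * Hmat (n - 2) (m - 1) k l *
        A l ⟨j.1 - 1, by have := j.isLt; omega⟩
    else if hin : i.1 = n - 1 then
      (if j.1 = n - 1 then 1 / (starRingEnd ℂ) μ else 0)
    else
      if hj0 : j.1 = 0 then 0
      else if hjn : j.1 = n - 1 then x ⟨i.1 - 1, by have := i.isLt; omega⟩
      else A ⟨i.1 - 1, by have := i.isLt; omega⟩ ⟨j.1 - 1, by have := j.isLt; omega⟩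

/-- Membership in the set S of the paper's Lemma: U has the block form
(formalgebra) with μ ≠ 0, A ∈ U(H′) and 2Re(c/μ) + xᵀH′x̄ = 0. -/
def inS (n m : ℕ) (U : Matrix (Fin n) (Fin n) ℂ) : Prop :=
  ∃ (μ c : ℂ) (x : Fin (n - 2) → ℂ) (A : Matrix (Fin (n - 2)) (Fin (n - 2)) ℂ),
    μ ≠ 0 ∧
    A.transpose * Hmat (n - 2) (m - 1) * A.map (starRingEnd ℂ) = Hmat (n - 2) (m - 1) ∧
    2 * (c / μ).re + (dotProduct x ((Hmat (n - 2) (m - 1)).mulVec (star x))).re = 0 ∧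
    U = mkS n m μ c x A


def emb {n : ℕ} (k : Fin (n-2)) : Fin n := ⟨k.1 + 1, by have := k.2; omega⟩

section
variable {n m : ℕ} (μ c : ℂ) (x : Fin (n - 2) → ℂ)
  (A : Matrix (Fin (n - 2)) (Fin (n - 2)) ℂ)

lemma mkS_zz (hn : 3 ≤ n) : mkS n m μ c x A ⟨0, by omega⟩ ⟨0, by omega⟩ = μ := by
  unfold mkS; rw [dif_pos rfl, dif_pos rfl]

lemma mkS_zw (hn : 3 ≤ n) : mkS n m μ c x A ⟨0, by omega⟩ ⟨n-1, by omega⟩ = c := by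
  unfold mkS; rw [dif_pos rfl, dif_neg (by simp only [Fin.val_mk]; omega), dif_pos rfl]

lemma mkS_ze (hn : 3 ≤ n) (l : Fin (n-2)) : mkS n m μ c x A ⟨0, by omega⟩ (emb l) =
    -μ * ∑ k, ∑ p, (starRingEnd ℂ) (x k) * Hmat (n - 2) (m - 1) k p * A p l := by
  have hl := l.2
  unfold mkS
  rw [dif_pos rfl, dif_neg (by simp only [emb, Fin.val_mk]; omega), dif_neg (by simp only [emb, Fin.val_mk]; omega)]
  refine congrArg (fun t => -μ * t)
    (Finset.sum_congr rfl (fun k _ => Finset.sum_congr rfl (fun p _ =>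
      congrArg _ (congrArg (A p) (Fin.ext rfl)))))

lemma mkS_wz (hn : 3 ≤ n) : mkS n m μ c x A ⟨n-1, by omega⟩ ⟨0, by omega⟩ = 0 := by
  unfold mkS; rw [dif_neg (by simp only [Fin.val_mk]; omega), dif_pos rfl, if_neg (by simp only [Fin.val_mk]; omega)]

lemma mkS_we (hn : 3 ≤ n) (l : Fin (n-2)) :
    mkS n m μ c x A ⟨n-1, by omega⟩ (emb l) = 0 := by
  have hl := l.2
  unfold mkS; rw [dif_neg (by simp only [Fin.val_mk]; omega), dif_pos rfl, if_neg (by simp only [emb, Fin.val_mk]; omega)]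

lemma mkS_ww (hn : 3 ≤ n) : mkS n m μ c x A ⟨n-1, by omega⟩ ⟨n-1, by omega⟩ =
    1 / (starRingEnd ℂ) μ := by
  unfold mkS; rw [dif_neg (by simp only [Fin.val_mk]; omega), dif_pos rfl, if_pos rfl]

lemma mkS_ez (hn : 3 ≤ n) (k : Fin (n-2)) :
    mkS n m μ c x A (emb k) ⟨0, by omega⟩ = 0 := by
  have hk := k.2
  unfold mkS
  rw [dif_neg (by simp only [emb, Fin.val_mk]; omega), dif_neg (by simp only [emb, Fin.val_mk]; omega), dif_pos rfl]

lemma mkS_ew (hn : 3 ≤ n) (k : Fin (n-2)) :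
    mkS n m μ c x A (emb k) ⟨n-1, by omega⟩ = x k := by
  have hk := k.2
  unfold mkS
  rw [dif_neg (by simp only [emb, Fin.val_mk]; omega), dif_neg (by simp only [emb, Fin.val_mk]; omega), dif_neg (by simp only [Fin.val_mk]; omega),
    dif_pos rfl]
  exact congrArg x (Fin.ext rfl)

lemma mkS_ee (hn : 3 ≤ n) (k l : Fin (n-2)) :
    mkS n m μ c x A (emb k) (emb l) = A k l := by
  have hk := k.2; have hl := l.2
  unfold mkS
  rw [dif_neg (by simp only [emb, Fin.val_mk]; omega), dif_neg (by simp only [emb, Fin.val_mk]; omega),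
    dif_neg (by simp only [emb, Fin.val_mk]; omega), dif_neg (by simp only [emb, Fin.val_mk]; omega)]
  refine congrArg₂ A (Fin.ext rfl) (Fin.ext rfl)

end
lemma Hmat_comm (n m : ℕ) (i j : Fin n) : Hmat n m i j = Hmat n m j i := by
  have hi := i.2; have hj := j.2
  simp only [Hmat, Fin.ext_iff]
  split_ifs <;> first | rfl | omega

lemma Hmat_conj (n m : ℕ) (i j : Fin n) :
    (starRingEnd ℂ) (Hmat n m i j) = Hmat n m i j := by
  simp only [Hmat]; split_ifs <;> simp

lemma Hmat_row (n m : ℕ) (hm : 1 ≤ m) (hnm : 2*m ≤ n) (i k : Fin n) :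
    Hmat n m i k =
      if k.1 = (if i.1 < m ∨ n ≤ i.1 + m then n - 1 - i.1 else i.1) then 1 else 0 := by
  have hi := i.2; have hk := k.2
  simp only [Hmat, Fin.ext_iff]
  split_ifs <;> first | rfl | omega

lemma Hmat_sq (n m : ℕ) (hm : 1 ≤ m) (hnm : 2*m ≤ n) :
    Hmat n m * Hmat n m = 1 := by
  ext i j
  have hi := i.2; have hj := j.2
  have hn : 0 < n := lt_of_le_of_lt (Nat.zero_le _) hi
  set p : ℕ := if i.1 < m ∨ n ≤ i.1 + m then n - 1 - i.1 else i.1 with hp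
  have hplt : p < n := by rw [hp]; split_ifs <;> omega
  rw [Matrix.mul_apply]
  rw [Finset.sum_eq_single (⟨p, hplt⟩ : Fin n)]
  · rw [Hmat_row n m hm hnm i, Hmat_row n m hm hnm ⟨p, hplt⟩ j, Matrix.one_apply]
    have hpp : (if ((⟨p, hplt⟩ : Fin n)).1 < m ∨ n ≤ ((⟨p, hplt⟩ : Fin n)).1 + m
        then n - 1 - ((⟨p, hplt⟩ : Fin n)).1 else ((⟨p, hplt⟩ : Fin n)).1) = i.1 := by
      simp only [hp]; split_ifs <;> omega
    rw [if_pos rfl, one_mul, hpp]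
    by_cases h : i = j
    · rw [if_pos (h ▸ rfl), if_pos h]
    · rw [if_neg (fun hh => h (Fin.ext hh.symm)), if_neg h]
  · intro b _ hb
    rw [Hmat_row n m hm hnm i]
    have : ¬ (b.1 = p) := fun h => hb (Fin.ext h)
    rw [if_neg this, zero_mul]
  · intro h; exact absurd (Finset.mem_univ _) h
section
variable {n m : ℕ}

lemma H_zero (hm : 1 ≤ m) (hn : 3 ≤ n) (j : Fin n) :
    Hmat n m ⟨0, by omega⟩ j = if j.1 = n-1 then 1 else 0 := by
  have hj := j.2
  simp only [Hmat, Fin.mk.injEq, Fin.ext_iff]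
  split_ifs <;> first | rfl | omega | simp_all

lemma H_last (hm : 1 ≤ m) (hn : 3 ≤ n) (hnm : 2*m ≤ n) (j : Fin n) :
    Hmat n m ⟨n-1, by omega⟩ j = if j.1 = 0 then 1 else 0 := by
  have hj := j.2
  simp only [Hmat, Fin.mk.injEq, Fin.ext_iff]
  split_ifs <;> first | rfl | omega | simp_all

lemma H_emb (hm : 1 ≤ m) (k l : Fin (n-2)) :
    Hmat n m (emb k) (emb l) = Hmat (n-2) (m-1) k l := by
  have hk := k.2; have hl := l.2
  simp only [Hmat, emb, Fin.mk.injEq, Fin.ext_iff]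
  split_ifs <;> first | rfl | omega | simp_all

lemma Hmat_comm' (i j : Fin n) : Hmat n m i j = Hmat n m j i := by
  have hi := i.2; have hj := j.2
  simp only [Hmat, Fin.mk.injEq, Fin.ext_iff]
  split_ifs <;> first | rfl | omega | simp_all

lemma sum_split {M : Type*} [AddCommMonoid M] (hn : 3 ≤ n) (f : Fin n → M) :
    ∑ i, f i = f ⟨0, by omega⟩ + (∑ k : Fin (n-2), f (emb k)) + f ⟨n-1, by omega⟩ := by
  obtain ⟨N, rfl⟩ : ∃ N, n = N + 2 := ⟨n - 2, by omega⟩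
  rw [Fin.sum_univ_succ, Fin.sum_univ_castSucc]
  have h2 : N + 2 - 2 = N := by omega
  rw [Fintype.sum_equiv (finCongr h2) (fun k => f (emb k))
    (fun i : Fin N => f ⟨i.1 + 1, by omega⟩) (fun k => rfl)]
  rw [← add_assoc]
  refine congrArg₂ _ (congrArg₂ _ ?_ ?_) ?_
  · exact congrArg f (by ext; simp)
  · exact Finset.sum_congr rfl (fun i _ => congrArg f (by ext; simp))
  · exact congrArg f (by ext; simp [Fin.last])

lemma H_col_zero (hm : 1 ≤ m) (hn : 3 ≤ n) (hnm : 2*m ≤ n) (i : Fin n) :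
    Hmat n m i ⟨0, by omega⟩ = if i.1 = n-1 then 1 else 0 := by
  have hi := i.2
  simp only [Hmat, Fin.mk.injEq, Fin.ext_iff]
  split_ifs <;> first | rfl | omega | simp_all

lemma H_col_last (hm : 1 ≤ m) (hn : 3 ≤ n) (i : Fin n) :
    Hmat n m i ⟨n-1, by omega⟩ = if i.1 = 0 then 1 else 0 := by
  have hi := i.2
  simp only [Hmat, Fin.mk.injEq, Fin.ext_iff]
  split_ifs <;> first | rfl | omega | simp_all

lemma H_zero_emb (hn : 3 ≤ n) (l : Fin (n-2)) :
    Hmat n m ⟨0, by omega⟩ (emb l) = 0 := by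
  have hl := l.2
  simp only [Hmat, emb, Fin.mk.injEq, Fin.ext_iff]
  split_ifs <;> first | rfl | omega | simp_all

lemma H_last_emb (hn : 3 ≤ n) (l : Fin (n-2)) :
    Hmat n m ⟨n-1, by omega⟩ (emb l) = 0 := by
  have hl := l.2
  simp only [Hmat, emb, Fin.mk.injEq, Fin.ext_iff]
  split_ifs <;> first | rfl | omega | simp_all

lemma entry_formula (hm : 1 ≤ m) (hn : 3 ≤ n) (hnm : 2*m ≤ n)
    (U : Matrix (Fin n) (Fin n) ℂ) (i j : Fin n) :
    (U.transpose * Hmat n m * U.map (starRingEnd ℂ)) i j =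
      U ⟨0, by omega⟩ i * (starRingEnd ℂ) (U ⟨n-1, by omega⟩ j)
      + U ⟨n-1, by omega⟩ i * (starRingEnd ℂ) (U ⟨0, by omega⟩ j)
      + ∑ k, ∑ l, U (emb k) i * Hmat (n-2) (m-1) k l *
          (starRingEnd ℂ) (U (emb l) j) := by
  have key : ∀ b, (U.transpose * Hmat n m) i b = ∑ a, U a i * Hmat n m a b := by
    intro b; rw [Matrix.mul_apply]; rfl
  have h1 : (U.transpose * Hmat n m) i ⟨0, by omega⟩ = U ⟨n-1, by omega⟩ i := by
    rw [key]
    calc ∑ a, U a i * Hmat n m a ⟨0, by omega⟩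
        = ∑ a, (if a = (⟨n-1, by omega⟩ : Fin n) then U a i else 0) := by
          refine Finset.sum_congr rfl (fun a _ => ?_)
          rw [H_col_zero hm hn hnm]
          by_cases h : a = (⟨n-1, by omega⟩ : Fin n)
          · subst h; simp
          · rw [if_neg (by simpa [Fin.ext_iff] using h), if_neg h, mul_zero]
      _ = U ⟨n-1, by omega⟩ i := by simp
  have h2 : (U.transpose * Hmat n m) i ⟨n-1, by omega⟩ = U ⟨0, by omega⟩ i := by
    rw [key]
    calc ∑ a, U a i * Hmat n m a ⟨n-1, by omega⟩
        = ∑ a, (if a = (⟨0, by omega⟩ : Fin n) then U a i else 0) := by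
          refine Finset.sum_congr rfl (fun a _ => ?_)
          rw [H_col_last hm hn]
          by_cases h : a = (⟨0, by omega⟩ : Fin n)
          · subst h; simp
          · rw [if_neg (by simpa [Fin.ext_iff] using h), if_neg h, mul_zero]
      _ = U ⟨0, by omega⟩ i := by simp
  have hmid : ∀ l : Fin (n-2), (U.transpose * Hmat n m) i (emb l)
      = ∑ k, U (emb k) i * Hmat (n-2) (m-1) k l := by
    intro l
    rw [key, sum_split hn, H_zero_emb hn, H_last_emb hn, mul_zero, mul_zero,
      add_zero, zero_add]
    exact Finset.sum_congr rfl (fun k _ => by rw [H_emb hm])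
  rw [Matrix.mul_apply, sum_split hn, h1, h2]
  simp only [hmid, Matrix.map_apply, Finset.sum_mul]
  rw [Finset.sum_comm]
  ring

end

section
variable {n m : ℕ}

lemma fin_cases3 (hn : 3 ≤ n) (i : Fin n) :
    i = ⟨0, by omega⟩ ∨ (∃ k : Fin (n-2), i = emb k) ∨ i = ⟨n-1, by omega⟩ := by
  by_cases h0 : i.1 = 0
  · exact Or.inl (Fin.ext h0)
  by_cases hl : i.1 = n-1
  · exact Or.inr (Or.inr (Fin.ext hl))
  · exact Or.inr (Or.inl ⟨⟨i.1 - 1, by have := i.2; omega⟩,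
      Fin.ext (by simp only [emb, Fin.val_mk]; omega)⟩)

lemma sum_swap_H (N M : ℕ) (a b : Fin N → ℂ) :
    ∑ k, ∑ l, a k * Hmat N M k l * b l = ∑ k, ∑ l, b k * Hmat N M k l * a l := by
  rw [Finset.sum_comm]
  exact Finset.sum_congr rfl (fun k _ => Finset.sum_congr rfl (fun l _ => by
    rw [Hmat_comm]; ring))

lemma mkS_unitary (hm : 1 ≤ m) (hn : 3 ≤ n) (hnm : 2*m ≤ n)
    (μ c : ℂ) (x : Fin (n-2) → ℂ) (A : Matrix (Fin (n-2)) (Fin (n-2)) ℂ)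
    (hμ : μ ≠ 0)
    (hA : A.transpose * Hmat (n-2) (m-1) * A.map (starRingEnd ℂ) = Hmat (n-2) (m-1))
    (hre : 2 * (c / μ).re +
      (dotProduct x ((Hmat (n-2) (m-1)).mulVec (star x))).re = 0) :
    (mkS n m μ c x A).transpose * Hmat n m * (mkS n m μ c x A).map (starRingEnd ℂ)
      = Hmat n m := by
  have hμ' : (starRingEnd ℂ) μ ≠ 0 := by simpa using hμ
  ext i j
  rw [entry_formula hm hn hnm]
  rcases fin_cases3 hn i with rfl | ⟨k0, rfl⟩ | rfl <;>
    rcases fin_cases3 hn j with rfl | ⟨l0, rfl⟩ | rfl <;>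
    simp only [mkS_zz μ c x A hn, mkS_zw μ c x A hn, mkS_ze μ c x A hn,
      mkS_wz μ c x A hn, mkS_we μ c x A hn, mkS_ww μ c x A hn,
      mkS_ez μ c x A hn, mkS_ew μ c x A hn, mkS_ee μ c x A hn]
  · -- z z
    rw [H_zero hm hn, if_neg (by simp only [Fin.val_mk]; omega)]
    simp
  · -- z (emb l0)
    rw [H_zero_emb hn]; simp
  · -- z w
    rw [H_zero hm hn, if_pos rfl]
    simp [hμ]
  · -- (emb k0) z
    rw [H_col_zero hm hn hnm,
      if_neg (by simp only [emb, Fin.val_mk]; have := k0.2; omega)]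
    simp
  · -- (emb k0) (emb l0)
    rw [H_emb hm]
    simp only [map_zero, mul_zero, zero_mul, add_zero, zero_add]
    have h := congrFun (congrFun hA k0) l0
    simp only [Matrix.mul_apply, Matrix.transpose_apply, Matrix.map_apply,
      Finset.sum_mul] at h
    rw [← h, Finset.sum_comm]
    try exact Finset.sum_congr rfl (fun k _ =>
      Finset.sum_congr rfl (fun l _ => by ring))
  · -- (emb k0) w
    rw [H_col_last hm hn, if_neg (by simp only [emb, Fin.val_mk]; omega)]
    simp only [map_zero, zero_mul, mul_zero, add_zero, zero_add, map_div₀, map_one,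
      Complex.conj_conj]
    have hswap : ∑ k, ∑ p, (starRingEnd ℂ) (x k) * Hmat (n-2) (m-1) k p * A p k0
        = ∑ k, ∑ l, A k k0 * Hmat (n-2) (m-1) k l * (starRingEnd ℂ) (x l) :=
      sum_swap_H (n-2) (m-1) (fun k => (starRingEnd ℂ) (x k)) (fun p => A p k0)
    rw [hswap]
    field_simp
    try ring
  · -- w z
    rw [H_last hm hn hnm, if_pos rfl]
    simp only [map_zero, mul_zero, zero_mul, add_zero, zero_add,
      Finset.sum_const_zero]
    field_simp
  · -- w (emb l0)
    rw [H_last_emb hn]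
    simp only [map_zero, mul_zero, zero_add, map_mul, map_neg, map_sum,
      Complex.conj_conj, Hmat_conj, map_div₀, map_one]
    have hswap : ∀ b : Fin (n-2) → ℂ,
        ∑ k, ∑ l, (starRingEnd ℂ) (x k) * Hmat (n-2) (m-1) k l * b l
        = ∑ k, ∑ l, b k * Hmat (n-2) (m-1) k l * (starRingEnd ℂ) (x l) := fun b =>
      sum_swap_H (n-2) (m-1) (fun k => (starRingEnd ℂ) (x k)) b
    field_simp
    ring_nf
    try rw [hswap]
    try ring
  · -- w w
    rw [H_last hm hn hnm, if_neg (by simp only [Fin.val_mk]; omega)]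
    simp only [map_div₀, map_one, Complex.conj_conj]
    have hQ : ∑ k, ∑ l, x k * Hmat (n-2) (m-1) k l * (starRingEnd ℂ) (x l)
        = ((dotProduct x ((Hmat (n-2) (m-1)).mulVec (star x))).re : ℂ) := by
      have hQ1 : dotProduct x ((Hmat (n-2) (m-1)).mulVec (star x))
          = ∑ k, ∑ l, x k * Hmat (n-2) (m-1) k l * (starRingEnd ℂ) (x l) := by
        simp only [dotProduct, Matrix.mulVec, Pi.star_apply, Finset.mul_sum]
        exact Finset.sum_congr rfl (fun k _ => Finset.sum_congr rfl (fun l _ => by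
          simp [mul_assoc, Complex.star_def]))
      have hconj : (starRingEnd ℂ)
          (∑ k, ∑ l, x k * Hmat (n-2) (m-1) k l * (starRingEnd ℂ) (x l))
          = ∑ k, ∑ l, x k * Hmat (n-2) (m-1) k l * (starRingEnd ℂ) (x l) := by
        simp only [map_sum, map_mul, Complex.conj_conj, Hmat_conj]
        exact sum_swap_H (n-2) (m-1) (fun k => (starRingEnd ℂ) (x k)) x
      rw [← hQ1] at hconj ⊢
      exact (Complex.conj_eq_iff_re.mp hconj).symm
    rw [hQ]
    have h1 : c * (1 / μ) + 1 / (starRingEnd ℂ) μ * (starRingEnd ℂ) c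
        = ((2 * (c/μ).re : ℝ) : ℂ) := by
      rw [show c * (1/μ) = c/μ by ring,
        show 1 / (starRingEnd ℂ) μ * (starRingEnd ℂ) c = (starRingEnd ℂ) (c/μ) by
          rw [map_div₀]; ring,
        Complex.add_conj]
    rw [h1, ← Complex.ofReal_add, hre]
    simp

lemma inS_of (hm : 1 ≤ m) (hn : 3 ≤ n) (hnm : 2*m ≤ n)
    (U : Matrix (Fin n) (Fin n) ℂ)
    (hU : U.transpose * Hmat n m * U.map (starRingEnd ℂ) = Hmat n m)
    (hcol : ∀ i : Fin n, i.1 ≠ 0 → U i ⟨0, by omega⟩ = 0)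
    (hμ0 : U ⟨0, by omega⟩ ⟨0, by omega⟩ ≠ 0) :
    (∃ (μ c : ℂ) (x : Fin (n - 2) → ℂ) (A : Matrix (Fin (n - 2)) (Fin (n - 2)) ℂ),
      μ ≠ 0 ∧
      A.transpose * Hmat (n - 2) (m - 1) * A.map (starRingEnd ℂ) = Hmat (n - 2) (m - 1) ∧
      2 * (c / μ).re + (dotProduct x ((Hmat (n - 2) (m - 1)).mulVec (star x))).re = 0 ∧
      U = mkS n m μ c x A) := by
  set z : Fin n := ⟨0, by omega⟩ with hz
  set w : Fin n := ⟨n-1, by omega⟩ with hw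
  set μ : ℂ := U z z with hμdef
  set c : ℂ := U z w with hcdef
  set x : Fin (n-2) → ℂ := fun k => U (emb k) w with hxdef
  set A : Matrix (Fin (n-2)) (Fin (n-2)) ℂ := fun k l => U (emb k) (emb l) with hAdef
  have key : ∀ i j, U z i * (starRingEnd ℂ) (U w j) + U w i * (starRingEnd ℂ) (U z j)
      + ∑ k, ∑ l, U (emb k) i * Hmat (n-2) (m-1) k l * (starRingEnd ℂ) (U (emb l) j)
      = Hmat n m i j := fun i j => by
    rw [← entry_formula hm hn hnm U i j, hU]
  have hUwz : U w z = 0 := hcol w (by simp only [hw, Fin.val_mk]; omega)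
  have hUez : ∀ k : Fin (n-2), U (emb k) z = 0 := fun k =>
    hcol _ (by simp only [emb, Fin.val_mk]; omega)
  have hμ' : (starRingEnd ℂ) μ ≠ 0 := by simpa using hμ0
  have hww : U w w = 1 / (starRingEnd ℂ) μ := by
    have h := key z w
    simp only [hUwz, hUez, zero_mul, mul_zero, add_zero, zero_add,
      Finset.sum_const_zero] at h
    rw [H_zero hm hn, if_pos rfl] at h
    have : (starRingEnd ℂ) (U w w) = 1/μ := by
      field_simp at h ⊢
      rw [mul_comm]; exact h
    calc U w w = (starRingEnd ℂ) ((starRingEnd ℂ) (U w w)) := by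
          rw [Complex.conj_conj]
      _ = 1 / (starRingEnd ℂ) μ := by rw [this, map_div₀, map_one]
  have hwe : ∀ l : Fin (n-2), U w (emb l) = 0 := by
    intro l
    have h := key z (emb l)
    simp only [hUwz, hUez, zero_mul, mul_zero, add_zero, zero_add,
      Finset.sum_const_zero] at h
    rw [H_zero_emb hn] at h
    rcases mul_eq_zero.mp h with h' | h'
    · exact absurd h' hμ0
    · simpa using h'
  have hA : A.transpose * Hmat (n-2) (m-1) * A.map (starRingEnd ℂ)
      = Hmat (n-2) (m-1) := by
    ext k l
    have h := key (emb k) (emb l)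
    rw [hwe l, hwe k] at h
    simp only [map_zero, mul_zero, zero_mul, add_zero, zero_add] at h
    rw [H_emb hm] at h
    simp only [Matrix.mul_apply, Matrix.transpose_apply, Matrix.map_apply,
      Finset.sum_mul]
    rw [Finset.sum_comm, ← h]
    try exact Finset.sum_congr rfl (fun a _ =>
      Finset.sum_congr rfl (fun b _ => by ring))
  have hrow : ∀ l : Fin (n-2), U z (emb l)
      = -μ * ∑ k, ∑ p, (starRingEnd ℂ) (x k) * Hmat (n-2) (m-1) k p * A p l := by
    intro l
    have h := key (emb l) w
    rw [hwe l, hww] at h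
    rw [H_col_last hm hn, if_neg (by simp only [emb, Fin.val_mk]; omega)] at h
    simp only [zero_mul, add_zero, map_div₀, map_one, Complex.conj_conj] at h
    have hs : ∑ k, ∑ p, (starRingEnd ℂ) (x k) * Hmat (n-2) (m-1) k p * A p l
        = ∑ k, ∑ p, A k l * Hmat (n-2) (m-1) k p * (starRingEnd ℂ) (x p) :=
      sum_swap_H (n-2) (m-1) (fun k => (starRingEnd ℂ) (x k)) (fun p => A p l)
    rw [hs]
    have h' : U z (emb l) * (1/μ)
        + ∑ k, ∑ p, A k l * Hmat (n-2) (m-1) k p * (starRingEnd ℂ) (x p) = 0 := h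
    field_simp at h' ⊢
    linear_combination h'
  have hre : 2 * (c / μ).re +
      (dotProduct x ((Hmat (n-2) (m-1)).mulVec (star x))).re = 0 := by
    have h := key w w
    rw [hww, H_last hm hn hnm, if_neg (by simp only [hw, Fin.val_mk]; omega)] at h
    have hQ1 : dotProduct x ((Hmat (n-2) (m-1)).mulVec (star x))
        = ∑ k, ∑ l, x k * Hmat (n-2) (m-1) k l * (starRingEnd ℂ) (x l) := by
      simp only [dotProduct, Matrix.mulVec, Pi.star_apply, Finset.mul_sum]
      exact Finset.sum_congr rfl (fun k _ => Finset.sum_congr rfl (fun l _ => by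
        simp [mul_assoc, Complex.star_def]))
    have e3 : (∑ k, ∑ l, U (emb k) w * Hmat (n-2) (m-1) k l
          * (starRingEnd ℂ) (U (emb l) w))
        = ∑ k, ∑ l, x k * Hmat (n-2) (m-1) k l * (starRingEnd ℂ) (x l) := rfl
    have e1 : U z w * (starRingEnd ℂ) (1 / (starRingEnd ℂ) μ) = c / μ := by
      rw [map_div₀, map_one, Complex.conj_conj, ← hcdef]; ring
    have e2 : 1 / (starRingEnd ℂ) μ * (starRingEnd ℂ) (U z w)
        = (starRingEnd ℂ) (c / μ) := by
      rw [← hcdef, map_div₀]; ring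
    rw [e1, e2, e3, ← hQ1] at h
    have h3 := congrArg Complex.re h
    simp only [Complex.add_re, Complex.conj_re, Complex.zero_re] at h3
    linarith
  refine ⟨μ, c, x, A, hμ0, hA, hre, ?_⟩
  ext i j
  rcases fin_cases3 hn i with rfl | ⟨k0, rfl⟩ | rfl <;>
    rcases fin_cases3 hn j with rfl | ⟨l0, rfl⟩ | rfl <;>
    simp only [mkS_zz μ c x A hn, mkS_zw μ c x A hn, mkS_ze μ c x A hn,
      mkS_wz μ c x A hn, mkS_we μ c x A hn, mkS_ww μ c x A hn,
      mkS_ez μ c x A hn, mkS_ew μ c x A hn, mkS_ee μ c x A hn] <;>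
    first
      | rfl
      | exact hrow _
      | exact hUez _
      | exact hUwz
      | exact hwe _
      | exact hww

lemma Hmat_map_conj : (Hmat n m).map (starRingEnd ℂ) = Hmat n m := by
  ext i j; simp [Matrix.map_apply, Hmat_conj]

lemma inS_props (hm : 1 ≤ m) (hn : 3 ≤ n) (hnm : 2*m ≤ n)
    (U : Matrix (Fin n) (Fin n) ℂ) (h : inS n m U) :
    U.transpose * Hmat n m * U.map (starRingEnd ℂ) = Hmat n m ∧
    (∀ i : Fin n, i.1 ≠ 0 → U i ⟨0, by omega⟩ = 0) ∧
    U ⟨0, by omega⟩ ⟨0, by omega⟩ ≠ 0 := by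
  obtain ⟨μ, c, x, A, hμ, hA, hre, rfl⟩ := h
  refine ⟨mkS_unitary hm hn hnm μ c x A hμ hA hre, ?_, ?_⟩
  · intro i hi
    rcases fin_cases3 hn i with rfl | ⟨k, rfl⟩ | rfl
    · exact absurd rfl hi
    · exact mkS_ez μ c x A hn k
    · exact mkS_wz μ c x A hn
  · rw [mkS_zz μ c x A hn]; exact hμ


/-- S is a subgroup of GLₙ(ℂ) contained in U(H). -/
theorem stmt2 (n m : ℕ) (hm : 1 ≤ m) (hn : 3 ≤ n) (hnm : 2 * m ≤ n) :
    inS n m (1 : Matrix (Fin n) (Fin n) ℂ) ∧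
    (∀ U V : Matrix (Fin n) (Fin n) ℂ, inS n m U → inS n m V → inS n m (U * V)) ∧
    (∀ U : Matrix (Fin n) (Fin n) ℂ, inS n m U → IsUnit U ∧ inS n m U⁻¹) ∧
    (∀ U : Matrix (Fin n) (Fin n) ℂ, inS n m U →
      U.transpose * Hmat n m * U.map (starRingEnd ℂ) = Hmat n m) := by
  have hnm' : 2*m ≤ n := hnm
  have hone_map : (1 : Matrix (Fin n) (Fin n) ℂ).map (starRingEnd ℂ) = 1 :=
    Matrix.map_one _ (map_zero _) (map_one _)
  refine ⟨?_, ?_, ?_, ?_⟩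
  · -- identity
    apply inS_of hm hn hnm'
    · rw [Matrix.transpose_one, hone_map, one_mul, mul_one]
    · intro i hi
      exact Matrix.one_apply_ne (fun h => hi (by rw [h]))
    · rw [Matrix.one_apply_eq]; exact one_ne_zero
  · -- product
    intro U V hU hV
    obtain ⟨hU1, hU2, hU3⟩ := inS_props hm hn hnm' U hU
    obtain ⟨hV1, hV2, hV3⟩ := inS_props hm hn hnm' V hV
    have hprod : ∀ i : Fin n, (U * V) i ⟨0, by omega⟩
        = U i ⟨0, by omega⟩ * V ⟨0, by omega⟩ ⟨0, by omega⟩ := by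
      intro i
      rw [Matrix.mul_apply]
      refine Finset.sum_eq_single _ (fun b _ hb => ?_)
        (fun h => absurd (Finset.mem_univ _) h)
      rw [hV2 b (fun h => hb (Fin.ext h)), mul_zero]
    apply inS_of hm hn hnm'
    · calc (U*V).transpose * Hmat n m * (U*V).map (starRingEnd ℂ)
          = V.transpose * (U.transpose * Hmat n m * U.map (starRingEnd ℂ))
            * V.map (starRingEnd ℂ) := by
            simp only [Matrix.transpose_mul, Matrix.map_mul, Matrix.mul_assoc]
        _ = Hmat n m := by rw [hU1, hV1]
    · intro i hi
      rw [hprod, hU2 i hi, zero_mul]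
    · rw [hprod]
      exact mul_ne_zero hU3 hV3
  · -- inverse
    intro U hU
    obtain ⟨hU1, hU2, hU3⟩ := inS_props hm hn hnm' U hU
    have hU1' : (U.map (starRingEnd ℂ)).transpose * Hmat n m * U = Hmat n m := by
      have h := congrArg (fun X => X.map (starRingEnd ℂ)) hU1
      simp only [Matrix.map_mul] at h
      rw [show (U.transpose).map (starRingEnd ℂ)
          = (U.map (starRingEnd ℂ)).transpose from rfl] at h
      rw [Hmat_map_conj] at h
      rw [show (U.map (starRingEnd ℂ)).map (starRingEnd ℂ) = U by
        ext i j; simp [Matrix.map_apply]] at h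
      exact h
    have hLU : (Hmat n m * (U.map (starRingEnd ℂ)).transpose * Hmat n m) * U = 1 := by
      rw [Matrix.mul_assoc, Matrix.mul_assoc, ← Matrix.mul_assoc
        ((U.map (starRingEnd ℂ)).transpose), hU1', Hmat_sq n m hm hnm']
    have hunit : IsUnit U := IsUnit.of_mul_eq_one_right _ hLU
    have hinv : U⁻¹ = Hmat n m * (U.map (starRingEnd ℂ)).transpose * Hmat n m :=
      Matrix.inv_eq_left_inv hLU
    have hUinv : U * U⁻¹ = 1 := by rw [hinv]; exact mul_eq_one_comm.mp hLU
    have hinvU : U⁻¹ * U = 1 := by rw [hinv]; exact hLU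
    refine ⟨hunit, ?_⟩
    have hcol : ∀ i : Fin n, U⁻¹ i ⟨0, by omega⟩ * U ⟨0, by omega⟩ ⟨0, by omega⟩
        = (1 : Matrix (Fin n) (Fin n) ℂ) i ⟨0, by omega⟩ := by
      intro i
      have hs : ∑ k, U⁻¹ i k * U k ⟨0, by omega⟩
          = U⁻¹ i ⟨0, by omega⟩ * U ⟨0, by omega⟩ ⟨0, by omega⟩ :=
        Finset.sum_eq_single _
          (fun b _ hb => by rw [hU2 b (fun h => hb (Fin.ext h)), mul_zero])
          (fun h => absurd (Finset.mem_univ _) h)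
      rw [← hinvU, Matrix.mul_apply, hs]
    apply inS_of hm hn hnm'
    · calc U⁻¹.transpose * Hmat n m * U⁻¹.map (starRingEnd ℂ)
          = U⁻¹.transpose * (U.transpose * Hmat n m * U.map (starRingEnd ℂ))
            * U⁻¹.map (starRingEnd ℂ) := by rw [hU1]
        _ = (U * U⁻¹).transpose * Hmat n m * ((U * U⁻¹).map (starRingEnd ℂ)) := by
            simp only [Matrix.transpose_mul, Matrix.map_mul, Matrix.mul_assoc]
        _ = Hmat n m := by
            rw [hUinv, Matrix.transpose_one, hone_map, one_mul, mul_one]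
    · intro i hi
      have h := hcol i
      rw [Matrix.one_apply_ne (fun h => hi (by rw [h]))] at h
      rcases mul_eq_zero.mp h with h' | h'
      · exact h'
      · exact absurd h' hU3
    · have h := hcol ⟨0, by omega⟩
      rw [Matrix.one_apply_eq] at h
      exact left_ne_zero_of_mul_eq_one h
  · -- contained in U(H)
    intro U hU
    exact (inS_props hm hn hnm' U hU).1
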